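/- arXiv:1810.09848 — 4 statements merged into one kernel-verified Lean document; each statement's English description precedes it below -/
import Mathlib

section
/- Let (L, α_L) be a Hom-preLie algebra over a field 𝕂 and let (M, α_M) be a Hom-co-representation of (L, α_L). Define the linear maps d_1 : M ⊗ L → M by d_1(m ⊗ x_1) = m·x_1 − x_1·m, and d_2 : M ⊗ L ⊗ L → M ⊗ L by d_2(m ⊗ x_1 ⊗ x_2) = m·x_1 ⊗ α_L(x_2) + x_2·m ⊗ α_L(x_1) − α_M(m) ⊗ x_1x_2. Then d_1 ∘ d_2 = 0. -/
universe u v v₁ v₂ v₃ v₄ w₁ w₂ w₃ w₄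

/-- A Hom-preLie algebra over a field `𝕂`: a vector space with a bilinear
multiplication `mul` and a linear map `a` satisfying
`(α x)(y z) - (x y)(α z) = (α y)(x z) - (y x)(α z)`. -/
structure HomPreLie (𝕂 : Type u) [Field 𝕂] (L : Type v) [AddCommGroup L] [Module 𝕂 L] where
  mul : L →ₗ[𝕂] L →ₗ[𝕂] L
  a : L →ₗ[𝕂] L
  identity : ∀ x y z : L,
    mul (a x) (mul y z) - mul (mul x y) (a z) = mul (a y) (mul x z) - mul (mul y x) (a z)

namespace HomPreLie

variable {𝕂 : Type u} [Field 𝕂]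

/-- A homomorphism of Hom-preLie algebras. -/
def IsHom {L : Type v₁} [AddCommGroup L] [Module 𝕂 L]
    {L' : Type v₂} [AddCommGroup L'] [Module 𝕂 L']
    (A : HomPreLie 𝕂 L) (B : HomPreLie 𝕂 L') (f : L →ₗ[𝕂] L') : Prop :=
  (∀ x y : L, f (A.mul x y) = B.mul (f x) (f y)) ∧ ∀ x : L, f (A.a x) = B.a (f x)

/-- Perfect: `L = LL`. -/
def Perfect {L : Type v₁} [AddCommGroup L] [Module 𝕂 L] (A : HomPreLie 𝕂 L) : Prop :=
  Submodule.span 𝕂 {z : L | ∃ x y : L, z = A.mul x y} = ⊤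

/-- α-perfect: `L = α(L)α(L)`. -/
def AlphaPerfect {L : Type v₁} [AddCommGroup L] [Module 𝕂 L] (A : HomPreLie 𝕂 L) : Prop :=
  Submodule.span 𝕂 {z : L | ∃ x y : L, z = A.mul (A.a x) (A.a y)} = ⊤

/-- The annihilator `Z(L)`. -/
def ann {L : Type v₁} [AddCommGroup L] [Module 𝕂 L] (A : HomPreLie 𝕂 L) : Set L :=
  {x : L | ∀ y : L, A.mul x y = 0 ∧ A.mul y x = 0}

/-- A short exact sequence of Hom-preLie algebras `0 → M → K → L → 0`. -/
structure IsSES {M : Type v₁} [AddCommGroup M] [Module 𝕂 M]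
    {K : Type v₂} [AddCommGroup K] [Module 𝕂 K]
    {L : Type v₃} [AddCommGroup L] [Module 𝕂 L]
    (AM : HomPreLie 𝕂 M) (AK : HomPreLie 𝕂 K) (AL : HomPreLie 𝕂 L)
    (i : M →ₗ[𝕂] K) (π : K →ₗ[𝕂] L) : Prop where
  hom_i : AM.IsHom AK i
  hom_proj : AK.IsHom AL π
  inj : Function.Injective i
  surj : Function.Surjective π
  ran_eq_ker : LinearMap.range i = LinearMap.ker π

/-- A central extension: a short exact sequence with `MK = 0 = KM`. -/
def IsCentralExt {M : Type v₁} [AddCommGroup M] [Module 𝕂 M]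
    {K : Type v₂} [AddCommGroup K] [Module 𝕂 K]
    {L : Type v₃} [AddCommGroup L] [Module 𝕂 L]
    (AM : HomPreLie 𝕂 M) (AK : HomPreLie 𝕂 K) (AL : HomPreLie 𝕂 L)
    (i : M →ₗ[𝕂] K) (π : K →ₗ[𝕂] L) : Prop :=
  IsSES AM AK AL i π ∧ ∀ (m : M) (k : K), AK.mul (i m) k = 0 ∧ AK.mul k (i m) = 0

/-- An α-central extension: a short exact sequence with `α_M(M)K = 0 = Kα_M(M)`. -/
def IsAlphaCentralExt {M : Type v₁} [AddCommGroup M] [Module 𝕂 M]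
    {K : Type v₂} [AddCommGroup K] [Module 𝕂 K]
    {L : Type v₃} [AddCommGroup L] [Module 𝕂 L]
    (AM : HomPreLie 𝕂 M) (AK : HomPreLie 𝕂 K) (AL : HomPreLie 𝕂 L)
    (i : M →ₗ[𝕂] K) (π : K →ₗ[𝕂] L) : Prop :=
  IsSES AM AK AL i π ∧
    ∀ (m : M) (k : K), AK.mul (i (AM.a m)) k = 0 ∧ AK.mul k (i (AM.a m)) = 0

/-- A universal central extension. -/
def IsUniversalCentralExt {M : Type v₁} [AddCommGroup M] [Module 𝕂 M]
    {K : Type v₂} [AddCommGroup K] [Module 𝕂 K]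
    {L : Type v₃} [AddCommGroup L] [Module 𝕂 L]
    (AM : HomPreLie 𝕂 M) (AK : HomPreLie 𝕂 K) (AL : HomPreLie 𝕂 L)
    (i : M →ₗ[𝕂] K) (π : K →ₗ[𝕂] L) : Prop :=
  IsCentralExt AM AK AL i π ∧
    ∀ (M' : Type w₁) (K' : Type w₂) [AddCommGroup M'] [Module 𝕂 M']
      [AddCommGroup K'] [Module 𝕂 K']
      (AM' : HomPreLie 𝕂 M') (AK' : HomPreLie 𝕂 K')
      (i' : M' →ₗ[𝕂] K') (π' : K' →ₗ[𝕂] L),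
      IsCentralExt AM' AK' AL i' π' →
        ∃! h : K →ₗ[𝕂] K', AK.IsHom AK' h ∧ π' ∘ₗ h = π

/-- A universal α-central extension: a central extension through which every
α-central extension factors uniquely. -/
def IsUniversalAlphaCentralExt {M : Type v₁} [AddCommGroup M] [Module 𝕂 M]
    {K : Type v₂} [AddCommGroup K] [Module 𝕂 K]
    {L : Type v₃} [AddCommGroup L] [Module 𝕂 L]
    (AM : HomPreLie 𝕂 M) (AK : HomPreLie 𝕂 K) (AL : HomPreLie 𝕂 L)
    (i : M →ₗ[𝕂] K) (π : K →ₗ[𝕂] L) : Prop :=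
  IsCentralExt AM AK AL i π ∧
    ∀ (M' : Type w₁) (K' : Type w₂) [AddCommGroup M'] [Module 𝕂 M']
      [AddCommGroup K'] [Module 𝕂 K']
      (AM' : HomPreLie 𝕂 M') (AK' : HomPreLie 𝕂 K')
      (i' : M' →ₗ[𝕂] K') (π' : K' →ₗ[𝕂] L),
      IsAlphaCentralExt AM' AK' AL i' π' →
        ∃! h : K →ₗ[𝕂] K', AK.IsHom AK' h ∧ π' ∘ₗ h = π

end HomPreLie

namespace HomPreLie

/-- A Hom-co-representation of a Hom-preLie algebra `(L, α_L)`: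
a vector space `M` with actions `lam : L ⊗ M → M`, `rho : M ⊗ L → M`
and a linear map `aM : M → M` satisfying the five compatibility axioms. -/
structure IsCoRep {𝕂 : Type u} [Field 𝕂] {L : Type v₁} [AddCommGroup L] [Module 𝕂 L]
    {M : Type v₂} [AddCommGroup M] [Module 𝕂 M] (A : HomPreLie 𝕂 L)
    (lam : L →ₗ[𝕂] M →ₗ[𝕂] M) (rho : M →ₗ[𝕂] L →ₗ[𝕂] M) (aM : M →ₗ[𝕂] M) : Prop where
  act1 : ∀ (x y : L) (m : M), rho (aM m) (A.mul x y) = rho (rho m x) (A.a y)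
  act2 : ∀ (x y : L) (m : M), lam (A.mul x y) (aM m) = lam (A.a x) (lam y m)
  act3 : ∀ (x y : L) (m : M), lam (A.a x) (rho m y) = rho (lam x m) (A.a y)
  act4 : ∀ (x : L) (m : M), aM (lam x m) = lam (A.a x) (aM m)
  act5 : ∀ (x : L) (m : M), aM (rho m x) = rho (aM m) (A.a x)

end HomPreLie

open TensorProduct

/-- For a Hom-co-representation `(M, α_M)` of a Hom-preLie algebra `(L, α_L)`,
with `d₁(m ⊗ x₁) = m·x₁ − x₁·m` and
`d₂(m ⊗ x₁ ⊗ x₂) = m·x₁ ⊗ α_L(x₂) + x₂·m ⊗ α_L(x₁) − α_M(m) ⊗ x₁x₂`,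
we have `d₁ ∘ d₂ = 0`. -/
theorem stmt0 {𝕂 : Type u} [Field 𝕂] {L : Type v₁} [AddCommGroup L] [Module 𝕂 L]
    {M : Type v₂} [AddCommGroup M] [Module 𝕂 M] (A : HomPreLie 𝕂 L)
    (lam : L →ₗ[𝕂] M →ₗ[𝕂] M) (rho : M →ₗ[𝕂] L →ₗ[𝕂] M) (aM : M →ₗ[𝕂] M)
    (hrep : HomPreLie.IsCoRep A lam rho aM)
    (d₁ : M ⊗[𝕂] L →ₗ[𝕂] M)
    (hd₁ : ∀ (m : M) (x₁ : L), d₁ (m ⊗ₜ x₁) = rho m x₁ - lam x₁ m)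
    (d₂ : (M ⊗[𝕂] L) ⊗[𝕂] L →ₗ[𝕂] M ⊗[𝕂] L)
    (hd₂ : ∀ (m : M) (x₁ x₂ : L),
      d₂ ((m ⊗ₜ x₁) ⊗ₜ x₂) =
        (rho m x₁) ⊗ₜ (A.a x₂) + (lam x₂ m) ⊗ₜ (A.a x₁) - (aM m) ⊗ₜ (A.mul x₁ x₂)) :
    d₁ ∘ₗ d₂ = 0 := by
  apply TensorProduct.ext
  apply TensorProduct.ext
  ext m x₁ x₂
  simp only [LinearMap.compr₂ₛₗ_apply, LinearMap.compr₂_apply, TensorProduct.mk_apply, LinearMap.comp_apply,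
    LinearMap.zero_apply, hd₂, map_add, map_sub, hd₁,
    hrep.act1, hrep.act2, hrep.act3]
  abel
end

section
/- The composition of two central extensions of Hom-preLie algebras need not be a central extension. Concretely, over any field 𝕂, let (L, 0) be the 2-dimensional Hom-preLie algebra with basis {b_1, b_2}, multiplication b_2b_1 = b_2, b_2b_2 = b_1 (all other products of basis elements zero) and zero structure map; let (K, 0) be the 3-dimensional Hom-preLie algebra with basis {a_1, a_2, a_3}, multiplication a_2a_2 = a_1, a_3a_2 = a_3, a_3a_3 = a_2 (all other products zero) and zero structure map; let (F, 0) be the 4-dimensional Hom-preLie algebra with basis {e_1, e_2, e_3, e_4}, multiplication e_2e_3 = e_1, e_3e_3 = e_2, e_4e_3 = e_4, e_4e_4 = e_3 (all other products zero) and zero structure map. The linear maps π : K → L with π(a_1) = 0, π(a_2) = b_1, π(a_3) = b_2, and ρ : F → K with ρ(e_1) = 0, ρ(e_2) = a_1, ρ(e_3) = a_2, ρ(e_4) = a_3, are surjective Hom-preLie homomorphisms with Ker(π) ⊆ Z(K) and Ker(ρ) ⊆ Z(F) (so each is a central extension), but the surjective homomorphism π ∘ ρ : F → L satisfies Ker(π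 ∘ ρ) ⊄ Z(F), so it is not a central extension. -/
universe u v v₁ v₂ v₃ v₄ w₁ w₂ w₃ w₄

/-- The bilinear multiplication of the 2-dimensional algebra `L`:
`b₂b₁ = b₂`, `b₂b₂ = b₁` (with `b₁ = e₀`, `b₂ = e₁`), all other products of basis
elements zero. -/
def mulL (𝕂 : Type u) [Field 𝕂] :
    (Fin 2 → 𝕂) →ₗ[𝕂] (Fin 2 → 𝕂) →ₗ[𝕂] (Fin 2 → 𝕂) :=
  LinearMap.mk₂ 𝕂 (fun x y => ![x 1 * y 1, x 1 * y 0])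
    (by intro x x' y; funext i; fin_cases i <;> simp <;> ring)
    (by intro c x y; funext i; fin_cases i <;> simp <;> ring)
    (by intro x y y'; funext i; fin_cases i <;> simp <;> ring)
    (by intro c x y; funext i; fin_cases i <;> simp <;> ring)

/-- Multiplication of the 3-dimensional algebra `K`: `a₂a₂ = a₁`, `a₃a₂ = a₃`,
`a₃a₃ = a₂` (with `a₁ = e₀`, `a₂ = e₁`, `a₃ = e₂`), all other products zero. -/
def mulK (𝕂 : Type u) [Field 𝕂] :
    (Fin 3 → 𝕂) →ₗ[𝕂] (Fin 3 → 𝕂) →ₗ[𝕂] (Fin 3 → 𝕂) :=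
  LinearMap.mk₂ 𝕂 (fun x y => ![x 1 * y 1, x 2 * y 2, x 2 * y 1])
    (by intro x x' y; funext i; fin_cases i <;> simp <;> ring)
    (by intro c x y; funext i; fin_cases i <;> simp <;> ring)
    (by intro x y y'; funext i; fin_cases i <;> simp <;> ring)
    (by intro c x y; funext i; fin_cases i <;> simp <;> ring)

/-- Multiplication of the 4-dimensional algebra `F`: `e₂e₃ = e₁`, `e₃e₃ = e₂`,
`e₄e₃ = e₄`, `e₄e₄ = e₃` (with `eᵢ` the `(i-1)`-st standard basis vector), all other
products zero. -/
def mulF (𝕂 : Type u) [Field 𝕂] :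
    (Fin 4 → 𝕂) →ₗ[𝕂] (Fin 4 → 𝕂) →ₗ[𝕂] (Fin 4 → 𝕂) :=
  LinearMap.mk₂ 𝕂 (fun x y => ![x 1 * y 2, x 2 * y 2, x 3 * y 3, x 3 * y 2])
    (by intro x x' y; funext i; fin_cases i <;> simp <;> ring)
    (by intro c x y; funext i; fin_cases i <;> simp <;> ring)
    (by intro x y y'; funext i; fin_cases i <;> simp <;> ring)
    (by intro c x y; funext i; fin_cases i <;> simp <;> ring)

/-- The Hom-preLie algebra `(L, 0)`. -/
def exL (𝕂 : Type u) [Field 𝕂] : HomPreLie 𝕂 (Fin 2 → 𝕂) :=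
  ⟨mulL 𝕂, 0, by intros; simp⟩

/-- The Hom-preLie algebra `(K, 0)`. -/
def exK (𝕂 : Type u) [Field 𝕂] : HomPreLie 𝕂 (Fin 3 → 𝕂) :=
  ⟨mulK 𝕂, 0, by intros; simp⟩

/-- The Hom-preLie algebra `(F, 0)`. -/
def exF (𝕂 : Type u) [Field 𝕂] : HomPreLie 𝕂 (Fin 4 → 𝕂) :=
  ⟨mulF 𝕂, 0, by intros; simp⟩

/-- The linear map `π : K → L`, `π(a₁) = 0`, `π(a₂) = b₁`, `π(a₃) = b₂`. -/
def piMap (𝕂 : Type u) [Field 𝕂] : (Fin 3 → 𝕂) →ₗ[𝕂] (Fin 2 → 𝕂) where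
  toFun x := ![x 1, x 2]
  map_add' x y := by funext i; fin_cases i <;> simp
  map_smul' c x := by funext i; fin_cases i <;> simp

/-- The linear map `ρ : F → K`, `ρ(e₁) = 0`, `ρ(e₂) = a₁`, `ρ(e₃) = a₂`,
`ρ(e₄) = a₃`. -/
def rhoMap (𝕂 : Type u) [Field 𝕂] : (Fin 4 → 𝕂) →ₗ[𝕂] (Fin 3 → 𝕂) where
  toFun x := ![x 1, x 2, x 3]
  map_add' x y := by funext i; fin_cases i <;> simp
  map_smul' c x := by funext i; fin_cases i <;> simp

/-- `π` and `ρ` are central extensions of Hom-preLie algebras, but the composition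
`π ∘ ρ : (F, 0) → (L, 0)` is a surjective homomorphism which is **not** a central
extension. -/
theorem stmt3 (𝕂 : Type u) [Field 𝕂] :
    (exK 𝕂).IsHom (exL 𝕂) (piMap 𝕂) ∧ Function.Surjective (piMap 𝕂) ∧
      (LinearMap.ker (piMap 𝕂) : Set (Fin 3 → 𝕂)) ⊆ (exK 𝕂).ann ∧
    (exF 𝕂).IsHom (exK 𝕂) (rhoMap 𝕂) ∧ Function.Surjective (rhoMap 𝕂) ∧
      (LinearMap.ker (rhoMap 𝕂) : Set (Fin 4 → 𝕂)) ⊆ (exF 𝕂).ann ∧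
    (exF 𝕂).IsHom (exL 𝕂) (piMap 𝕂 ∘ₗ rhoMap 𝕂) ∧
      Function.Surjective (piMap 𝕂 ∘ₗ rhoMap 𝕂) ∧
    ¬ ((LinearMap.ker (piMap 𝕂 ∘ₗ rhoMap 𝕂) : Set (Fin 4 → 𝕂)) ⊆ (exF 𝕂).ann) := by
  refine ⟨⟨?_, ?_⟩, ?_, ?_, ⟨?_, ?_⟩, ?_, ?_, ⟨?_, ?_⟩, ?_, ?_⟩
  · intro x y
    funext i
    fin_cases i <;> simp [exK, exL, mulK, mulL, piMap]
  · intro x; simp [exK, exL, piMap]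
  · intro b
    exact ⟨![0, b 0, b 1], by funext i; fin_cases i <;> simp [piMap]⟩
  · intro x hx y
    simp only [SetLike.mem_coe, LinearMap.mem_ker] at hx
    have h1 : x 1 = 0 := congrFun hx 0
    have h2 : x 2 = 0 := congrFun hx 1
    constructor <;> funext i <;> fin_cases i <;> simp [exK, mulK, h1, h2]
  · intro x y
    funext i
    fin_cases i <;> simp [exF, exK, mulF, mulK, rhoMap]
  · intro x; simp [exF, exK, rhoMap]
  · intro b
    exact ⟨![0, b 0, b 1, b 2], by funext i; fin_cases i <;> simp [rhoMap]⟩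
  · intro x hx y
    simp only [SetLike.mem_coe, LinearMap.mem_ker] at hx
    have h1 : x 1 = 0 := congrFun hx 0
    have h2 : x 2 = 0 := congrFun hx 1
    have h3 : x 3 = 0 := congrFun hx 2
    constructor <;> funext i <;> fin_cases i <;> simp [exF, mulF, h1, h2, h3]
  · intro x y
    funext i
    fin_cases i <;> simp [exF, exL, mulF, mulL, piMap, rhoMap]
  · intro x; simp [exF, exL, piMap, rhoMap]
  · intro b
    exact ⟨![0, 0, b 0, b 1], by funext i; fin_cases i <;> simp [piMap, rhoMap]⟩
  · intro h
    have hm : (![0,1,0,0] : Fin 4 → 𝕂) ∈ (LinearMap.ker (piMap 𝕂 ∘ₗ rhoMap 𝕂) : Set (Fin 4 → 𝕂)) := by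
      simp only [SetLike.mem_coe, LinearMap.mem_ker]
      funext i; fin_cases i <;> simp [piMap, rhoMap]
    have := (h hm ![0,0,1,0]).1
    have h0 : (exF 𝕂).mul ![0,1,0,0] ![0,0,1,0] 0 = (0 : 𝕂) := by rw [this]; rfl
    simp [exF, mulF] at h0
end

section
/- Let 0 → (M, α_M) →(i) (K, α_K) →(π) (L, α_L) → 0 be an α-central extension of Hom-preLie algebras with (K, α_K) a perfect Hom-preLie algebra, and let 0 → (N, α_N) →(j) (A, α_A) →(τ) (L, α_L) → 0 be a central extension. If f_1, f_2 : (K, α_K) → (A, α_A) are Hom-preLie homomorphisms with τ ∘ f_1 = π = τ ∘ f_2, then f_1 = f_2. -/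
universe u v v₁ v₂ v₃ v₄ w₁ w₂ w₃ w₄

/-- Given an α-central extension `0 → (M,α_M) → (K,α_K) →π (L,α_L) → 0` with `K` perfect
and a central extension `0 → (N,α_N) → (A,α_A) →τ (L,α_L) → 0`, any two Hom-preLie
homomorphisms `f₁ f₂ : K → A` with `τ ∘ f₁ = π = τ ∘ f₂` coincide. -/
theorem stmt5 {𝕂 : Type u} [Field 𝕂]
    {M : Type v₁} [AddCommGroup M] [Module 𝕂 M]
    {K : Type v₂} [AddCommGroup K] [Module 𝕂 K]
    {L : Type v₃} [AddCommGroup L] [Module 𝕂 L]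
    {N : Type w₁} [AddCommGroup N] [Module 𝕂 N]
    {A : Type w₂} [AddCommGroup A] [Module 𝕂 A]
    (AM : HomPreLie 𝕂 M) (AK : HomPreLie 𝕂 K) (AL : HomPreLie 𝕂 L)
    (AN : HomPreLie 𝕂 N) (AA : HomPreLie 𝕂 A)
    (i : M →ₗ[𝕂] K) (π : K →ₗ[𝕂] L) (j : N →ₗ[𝕂] A) (τ : A →ₗ[𝕂] L)
    (hαcentral : HomPreLie.IsAlphaCentralExt AM AK AL i π)
    (hperf : AK.Perfect)
    (hcentral : HomPreLie.IsCentralExt AN AA AL j τ)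
    (f₁ f₂ : K →ₗ[𝕂] A)
    (hf₁ : AK.IsHom AA f₁) (hf₂ : AK.IsHom AA f₂)
    (hcomm₁ : τ ∘ₗ f₁ = π) (hcomm₂ : τ ∘ₗ f₂ = π) :
    f₁ = f₂ := by
  have hcen : ∀ x : K, ∀ b : A, AA.mul (f₁ x - f₂ x) b = 0 ∧ AA.mul b (f₁ x - f₂ x) = 0 := by
    intro x b
    have hτ : τ (f₁ x - f₂ x) = 0 := by
      have h1 : τ (f₁ x) = π x := congrFun (congrArg DFunLike.coe hcomm₁) x
      have h2 : τ (f₂ x) = π x := congrFun (congrArg DFunLike.coe hcomm₂) x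
      simp [map_sub, h1, h2]
    have hmem : f₁ x - f₂ x ∈ LinearMap.range j := by
      rw [hcentral.1.ran_eq_ker]; exact hτ
    obtain ⟨n, hn⟩ := hmem
    rw [← hn]; exact hcentral.2 n b
  have hagree : ∀ x y : K, f₁ (AK.mul x y) = f₂ (AK.mul x y) := by
    intro x y
    rw [hf₁.1, hf₂.1]
    have key : AA.mul (f₁ x) (f₁ y)
        = AA.mul (f₁ x - f₂ x) (f₁ y) + AA.mul (f₂ x) (f₁ y - f₂ y)
          + AA.mul (f₂ x) (f₂ y) := by
      simp only [map_sub, LinearMap.sub_apply]; abel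
    rw [key, (hcen x (f₁ y)).1, (hcen y (f₂ x)).2]; abel
  ext x
  have hx : x ∈ Submodule.span 𝕂 {z : K | ∃ a b : K, z = AK.mul a b} := by
    rw [hperf]; trivial
  induction hx using Submodule.span_induction with
  | mem z hz => obtain ⟨a, b, rfl⟩ := hz; exact hagree a b
  | zero => simp
  | add a b _ _ ha hb => simp [map_add, ha, hb]
  | smul c a _ ha => simp [map_smul, ha]
end

section
/- Let 0 → (M, α_M) →(i) (K, α_K) →(π) (L, α_L) → 0 be a central extension of Hom-preLie algebras with (K, α_K) an α-perfect Hom-preLie algebra, and let 0 → (N, α_N) →(j) (A, α_A) →(τ) (L, α_L) → 0 be an α-central extension. If f_1, f_2 : (K, α_K) → (A, α_A) are Hom-preLie homomorphisms with τ ∘ f_1 = π = τ ∘ f_2, then f_1 = f_2. -/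
universe u v v₁ v₂ v₃ v₄ w₁ w₂ w₃ w₄

/-- Given a central extension `0 → (M,α_M) → (K,α_K) →π (L,α_L) → 0` with `(K,α_K)`
α-perfect and an α-central extension `0 → (N,α_N) → (A,α_A) →τ (L,α_L) → 0`, any two
Hom-preLie homomorphisms `f₁ f₂ : K → A` with `τ ∘ f₁ = π = τ ∘ f₂` coincide. -/
theorem stmt18 {𝕂 : Type u} [Field 𝕂]
    {M : Type v₁} [AddCommGroup M] [Module 𝕂 M]
    {K : Type v₂} [AddCommGroup K] [Module 𝕂 K]
    {L : Type v₃} [AddCommGroup L] [Module 𝕂 L]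
    {N : Type w₁} [AddCommGroup N] [Module 𝕂 N]
    {A : Type w₂} [AddCommGroup A] [Module 𝕂 A]
    (AM : HomPreLie 𝕂 M) (AK : HomPreLie 𝕂 K) (AL : HomPreLie 𝕂 L)
    (AN : HomPreLie 𝕂 N) (AA : HomPreLie 𝕂 A)
    (i : M →ₗ[𝕂] K) (π : K →ₗ[𝕂] L) (j : N →ₗ[𝕂] A) (τ : A →ₗ[𝕂] L)
    (hcentral : HomPreLie.IsCentralExt AM AK AL i π)
    (hαperf : AK.AlphaPerfect)
    (hαcentral : HomPreLie.IsAlphaCentralExt AN AA AL j τ)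
    (f₁ f₂ : K →ₗ[𝕂] A)
    (hf₁ : AK.IsHom AA f₁) (hf₂ : AK.IsHom AA f₂)
    (hcomm₁ : τ ∘ₗ f₁ = π) (hcomm₂ : τ ∘ₗ f₂ = π) :
    f₁ = f₂ := by
  -- for each k, f₁ k - f₂ k ∈ range j
  have hdiff : ∀ k : K, ∃ n : N, f₁ k = f₂ k + j n := by
    intro k
    have : τ (f₁ k - f₂ k) = 0 := by
      have h1 : τ (f₁ k) = π k := congrFun (congrArg DFunLike.coe hcomm₁) k
      have h2 : τ (f₂ k) = π k := congrFun (congrArg DFunLike.coe hcomm₂) k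
      simp [h1, h2]
    have : f₁ k - f₂ k ∈ LinearMap.range j := by
      rw [hαcentral.1.ran_eq_ker]; exact this
    obtain ⟨n, hn⟩ := this
    exact ⟨n, by rw [hn]; abel⟩
  have key : ∀ z ∈ {z : K | ∃ x y : K, z = AK.mul (AK.a x) (AK.a y)}, f₁ z = f₂ z := by
    rintro z ⟨x, y, rfl⟩
    obtain ⟨n, hn⟩ := hdiff x
    obtain ⟨n', hn'⟩ := hdiff y
    rw [hf₁.1, hf₂.1, hf₁.2, hf₁.2, hf₂.2, hf₂.2, hn, hn']
    have ja : ∀ m : N, AA.a (j m) = j (AN.a m) := fun m => (hαcentral.1.hom_i.2 m).symm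
    simp only [map_add, ja, map_add, LinearMap.add_apply]
    rw [(hαcentral.2 n (AA.a (f₂ y))).1, (hαcentral.2 n' (AA.a (f₂ x))).2,
      (hαcentral.2 n' (j (AN.a n))).2]
    abel
  have : ∀ k : K, f₁ k = f₂ k := by
    intro k
    have hk : k ∈ Submodule.span 𝕂 {z : K | ∃ x y : K, z = AK.mul (AK.a x) (AK.a y)} := by
      rw [hαperf]; trivial
    induction hk using Submodule.span_induction with
    | mem z hz => exact key z hz
    | zero => simp
    | add a b _ _ ha hb => simp [ha, hb]
    | smul c a _ ha => simp [ha]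
  exact LinearMap.ext this
end
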